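/- Let C be a weakly abelian category. A morphism f : X ⟶ Y in C is a monomorphism if and only if it is a split monomorphism, i.e., there exists r : Y ⟶ X with f ≫ r = 𝟙 X. -/
import Mathlib


open CategoryTheory CategoryTheory.Limits

/-- `i : K ⟶ X` is a *weak kernel* of `f : X ⟶ Y` if `i ≫ f = 0` and every `t : T ⟶ X` with
`t ≫ f = 0` factors through `i`. -/
def IsWeakKernel {C : Type*} [Category C] [HasZeroMorphisms C]
    {K X Y : C} (i : K ⟶ X) (f : X ⟶ Y) : Prop :=
  i ≫ f = 0 ∧ ∀ ⦃T : C⦄ (t : T ⟶ X), t ≫ f = 0 → ∃ t' : T ⟶ K, t' ≫ i = t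

/-- `p : Y ⟶ Q` is a *weak cokernel* of `f : X ⟶ Y` if `f ≫ p = 0` and every `s : Y ⟶ T` with
`f ≫ s = 0` factors through `p`. -/
def IsWeakCokernel {C : Type*} [Category C] [HasZeroMorphisms C]
    {X Y Q : C} (f : X ⟶ Y) (p : Y ⟶ Q) : Prop :=
  f ≫ p = 0 ∧ ∀ ⦃T : C⦄ (s : Y ⟶ T), f ≫ s = 0 → ∃ s' : Q ⟶ T, p ≫ s' = s

/-- An additive category is *weakly abelian* if every morphism has a weak kernel and a weak
cokernel, and every morphism is a weak kernel of some morphism and a weak cokernel of some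
morphism. -/
def WeaklyAbelian (C : Type*) [Category C] [Preadditive C] [HasZeroObject C]
    [HasFiniteBiproducts C] : Prop :=
  (∀ ⦃X Y : C⦄ (f : X ⟶ Y), ∃ (K : C) (i : K ⟶ X), IsWeakKernel i f) ∧
  (∀ ⦃X Y : C⦄ (f : X ⟶ Y), ∃ (Q : C) (p : Y ⟶ Q), IsWeakCokernel f p) ∧
  (∀ ⦃X Y : C⦄ (f : X ⟶ Y), ∃ (Z : C) (g : Y ⟶ Z), IsWeakKernel f g) ∧
  (∀ ⦃X Y : C⦄ (f : X ⟶ Y), ∃ (W : C) (e : W ⟶ X), IsWeakCokernel e f)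

/-- In a weakly abelian category, a morphism is a monomorphism if and only if it is a split
monomorphism. -/
theorem mono_iff_splitMono {C : Type*} [Category C] [Preadditive C]
    [HasZeroObject C] [HasFiniteBiproducts C] (hC : WeaklyAbelian C)
    {X Y : C} (f : X ⟶ Y) :
    Mono f ↔ ∃ r : Y ⟶ X, f ≫ r = 𝟙 X := by
  constructor
  · intro hf
    obtain ⟨W, e, he0, hfac⟩ := hC.2.2.2 f
    have he : e = 0 := by
      rw [← cancel_mono f, he0, zero_comp]
    obtain ⟨r, hr⟩ := hfac (𝟙 X) (by rw [he, zero_comp])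
    exact ⟨r, hr⟩
  · rintro ⟨r, hr⟩
    exact ⟨fun g h hgh => by
      have := congrArg (· ≫ r) hgh
      simpa [hr] using this⟩
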